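/- arXiv:1803.02011 — 3 statements merged into one kernel-verified Lean document; each statement's English description precedes it below -/
import Mathlib

section
/- Let G be a compact group acting linearly on a finite dimensional real vector space V, and suppose u, v ∈ V lie in distinct G-orbits. Then there exists a G-invariant polynomial p on V with p(u) ≠ p(v). -/
open MeasureTheory TopologicalSpace

def polyFuns (V : Type*) [AddCommGroup V] [Module ℝ V] : Subalgebra ℝ (V → ℝ) :=
  Algebra.adjoin ℝ (Set.range fun l : Module.Dual ℝ V => (l : V → ℝ))

lemma polyFuns_continuous {V : Type*} [AddCommGroup V] [Module ℝ V] [FiniteDimensional ℝ V]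
    [TopologicalSpace V] [IsTopologicalAddGroup V] [ContinuousSMul ℝ V] [T2Space V]
    {p : V → ℝ} (hp : p ∈ polyFuns V) : Continuous p := by
  induction hp using Algebra.adjoin_induction with
  | mem x hx => obtain ⟨l, rfl⟩ := hx; exact l.continuous_of_finiteDimensional
  | algebraMap r => exact continuous_const
  | add x y _ _ hx hy => exact hx.add hy
  | mul x y _ _ hx hy => exact hx.mul hy

lemma totalDegree_aeval_le {σ : Type*} {R : Type*} [CommSemiring R]
    (f : σ → MvPolynomial σ R) (hf : ∀ i, (f i).totalDegree ≤ 1) (P : MvPolynomial σ R) :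
    (MvPolynomial.aeval f P).totalDegree ≤ P.totalDegree := by
  conv_lhs => rw [P.as_sum]
  rw [map_sum]
  refine (MvPolynomial.totalDegree_finset_sum _ _).trans (Finset.sup_le fun v hv => ?_)
  rw [MvPolynomial.aeval_monomial]
  refine (MvPolynomial.totalDegree_mul _ _).trans ?_
  have h1 : (algebraMap R (MvPolynomial σ R) (MvPolynomial.coeff v P)).totalDegree = 0 := by
    rw [MvPolynomial.algebraMap_eq]; exact MvPolynomial.totalDegree_C _
  rw [h1, zero_add]
  rw [Finsupp.prod]
  refine (MvPolynomial.totalDegree_finset_prod _ _).trans ?_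
  calc ∑ i ∈ v.support, (f i ^ v i).totalDegree
      ≤ ∑ i ∈ v.support, v i * 1 :=
        Finset.sum_le_sum fun i _ => (MvPolynomial.totalDegree_pow _ _).trans
          (Nat.mul_le_mul_left (v i) (hf i))
    _ = v.sum fun _ e => e := by simp [Finsupp.sum]
    _ ≤ P.totalDegree := MvPolynomial.le_totalDegree hv

section phi

variable {V : Type*} [AddCommGroup V] [Module ℝ V] [FiniteDimensional ℝ V]

/-- The representation map from polynomials to polynomial functions, via a basis. -/
noncomputable def polyRep (b : Module.Basis (Fin (Module.finrank ℝ V)) ℝ V) :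
    MvPolynomial (Fin (Module.finrank ℝ V)) ℝ →ₐ[ℝ] (V → ℝ) :=
  MvPolynomial.aeval (fun i => (b.coord i : V → ℝ))

lemma polyRep_mem (b : Module.Basis (Fin (Module.finrank ℝ V)) ℝ V)
    (P : MvPolynomial (Fin (Module.finrank ℝ V)) ℝ) : polyRep b P ∈ polyFuns V := by
  have h2 : polyRep b P ∈ Algebra.adjoin ℝ (Set.range fun i => ((b.coord i : V → ℝ))) := by
    rw [Algebra.adjoin_range_eq_range_aeval]; exact ⟨P, rfl⟩
  refine Algebra.adjoin_mono ?_ h2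
  rintro _ ⟨i, rfl⟩
  exact ⟨b.coord i, rfl⟩

lemma polyFuns_le_range (b : Module.Basis (Fin (Module.finrank ℝ V)) ℝ V) {p : V → ℝ}
    (hp : p ∈ polyFuns V) : ∃ P, polyRep b P = p := by
  suffices hle : polyFuns V ≤ (polyRep b).range by
    obtain ⟨P, hP⟩ := hle hp; exact ⟨P, hP⟩
  apply Algebra.adjoin_le
  rintro _ ⟨l, rfl⟩
  refine ⟨∑ i, MvPolynomial.C (l (b i)) * MvPolynomial.X i, ?_⟩
  rw [map_sum]
  funext w
  have hw := b.sum_repr w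
  calc (∑ i, polyRep b (MvPolynomial.C (l (b i)) * MvPolynomial.X i)) w
      = ∑ i, l (b i) * b.repr w i := by
        simp [polyRep, MvPolynomial.aeval_X, Module.Basis.coord_apply]
    _ = l w := by
        conv_rhs => rw [← hw]
        rw [map_sum]
        simp [mul_comm]

lemma polyRep_comp_linear (b : Module.Basis (Fin (Module.finrank ℝ V)) ℝ V) (T : V →ₗ[ℝ] V)
    (P : MvPolynomial (Fin (Module.finrank ℝ V)) ℝ) :
    polyRep b (MvPolynomial.aeval
      (fun i => ∑ j, MvPolynomial.C (b.coord i (T (b j))) * MvPolynomial.X j) P)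
      = fun w => polyRep b P (T w) := by
  set f := fun i => ∑ j, MvPolynomial.C (b.coord i (T (b j))) * MvPolynomial.X j with hf
  induction P using MvPolynomial.induction_on with
  | C a =>
      funext w
      simp [polyRep, MvPolynomial.aeval_C]
  | add p q hp hq =>
      rw [map_add, map_add, map_add]
      funext w
      simp only [Pi.add_apply]
      rw [congr_fun hp w, congr_fun hq w]
  | mul_X p i hp =>
      rw [map_mul, map_mul, map_mul]
      funext w
      simp only [Pi.mul_apply]
      rw [congr_fun hp w]
      congr 1
      -- ⊢ polyRep b (aeval f (X i)) w = polyRep b (X i) (T w)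
      have h1 : polyRep b (MvPolynomial.X i) = (b.coord i : V → ℝ) := by
        simp [polyRep]
      rw [MvPolynomial.aeval_X, hf, map_sum]
      have hw := b.sum_repr w
      calc (∑ j, polyRep b (MvPolynomial.C (b.coord i (T (b j))) * MvPolynomial.X j)) w
          = ∑ j, b.coord i (T (b j)) * b.repr w j := by
            simp [polyRep, MvPolynomial.aeval_X, Module.Basis.coord_apply]
        _ = b.coord i (T w) := by
            conv_rhs => rw [← hw]
            rw [map_sum, map_sum]
            simp [mul_comm]
        _ = polyRep b (MvPolynomial.X i) (T w) := by rw [h1]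

end phi

/-- In a finite-dimensional space `W` of functions `α → ℝ`, every element is determined by
finitely many evaluation points, linearly. -/
lemma exists_eval_expansion {α : Type*} (W : Submodule ℝ (α → ℝ)) [FiniteDimensional ℝ W] :
    ∃ (m : ℕ) (pts : Fin m → α) (f : Fin m → W), ∀ (x : W) (a : α),
      (x : α → ℝ) a = ∑ j, (x : α → ℝ) (pts j) * (f j : α → ℝ) a := by
  classical
  let evW : α → Module.Dual ℝ W := fun a => (LinearMap.proj a).comp W.subtype
  have hspan : Submodule.span ℝ (Set.range evW) = ⊤ := by
    have hco : (Submodule.span ℝ (Set.range evW)).dualCoannihilator = ⊥ := by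
      rw [eq_bot_iff]
      intro x hx
      rw [Submodule.mem_dualCoannihilator] at hx
      have hx0 : ∀ a, (x : α → ℝ) a = 0 := fun a =>
        hx (evW a) (Submodule.subset_span ⟨a, rfl⟩)
      simpa using Subtype.ext (funext hx0)
    have h2 := Subspace.dualCoannihilator_dualAnnihilator_eq
      (W := Submodule.span ℝ (Set.range evW))
    rw [hco, Submodule.dualAnnihilator_bot] at h2
    exact h2.symm
  obtain ⟨s, hs_sub, hs_span, hs_ind⟩ := exists_linearIndependent ℝ (Set.range evW)
  rw [hspan] at hs_span
  have hs_fin : s.Finite := hs_ind.set_finite_of_isNoetherian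
  haveI : Fintype s := hs_fin.fintype
  choose pts hpts using fun σ : s => hs_sub σ.2
  let B : Module.Basis s ℝ (Module.Dual ℝ W) :=
    Module.Basis.mk hs_ind (by rw [Subtype.range_coe, hs_span])
  let f : s → W := fun σ => (Module.evalEquiv ℝ W).symm (B.dualBasis σ)
  let e := Fintype.equivFin s
  refine ⟨Fintype.card s, pts ∘ e.symm, f ∘ e.symm, fun x a => ?_⟩
  -- expand `x` in terms of the basis dual to `B`
  have hexp : x = ∑ σ : s, (σ : Module.Dual ℝ W) x • f σ := by
    apply (Module.evalEquiv ℝ W).injective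
    rw [map_sum]
    have h1 : ∀ σ : s, Module.evalEquiv ℝ W ((σ : Module.Dual ℝ W) x • f σ)
        = (σ : Module.Dual ℝ W) x • B.dualBasis σ := by
      intro σ
      rw [LinearEquiv.map_smul, LinearEquiv.apply_symm_apply]
    rw [Finset.sum_congr rfl fun σ _ => h1 σ]
    have h2 : ∀ σ : s, (σ : Module.Dual ℝ W) x
        = B.dualBasis.repr (Module.evalEquiv ℝ W x) σ := by
      intro σ
      rw [Module.Basis.dualBasis_repr, Module.Basis.mk_apply, Module.evalEquiv_apply, Module.Dual.eval_apply]
    rw [Finset.sum_congr rfl fun σ _ => by rw [h2 σ]]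
    exact (B.dualBasis.sum_repr (Module.evalEquiv ℝ W x)).symm
  calc (x : α → ℝ) a = ((∑ σ : s, (σ : Module.Dual ℝ W) x • f σ : W) : α → ℝ) a := by
        rw [← hexp]
    _ = ∑ σ : s, (σ : Module.Dual ℝ W) x * (f σ : α → ℝ) a := by
        rw [Submodule.coe_sum]
        rw [Finset.sum_apply]
        simp [Submodule.coe_smul]
    _ = ∑ σ : s, (x : α → ℝ) (pts σ) * (f σ : α → ℝ) a := by
        refine Finset.sum_congr rfl fun σ _ => ?_
        congr 1
        rw [← hpts σ]
        rfl
    _ = ∑ j, (x : α → ℝ) ((pts ∘ e.symm) j) * ((f ∘ e.symm) j : α → ℝ) a :=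
        (Equiv.sum_comp e.symm fun σ => (x : α → ℝ) (pts σ) * (f σ : α → ℝ) a).symm

open MeasureTheory

/-- Polynomial invariants of a compact group separate orbits: if `u, v` lie in distinct orbits,
some `G`-invariant polynomial takes different values at `u` and `v`. -/
theorem invariant_poly_separates_orbits
    (G : Type*) [Group G] [TopologicalSpace G] [IsTopologicalGroup G] [CompactSpace G]
    (V : Type*) [AddCommGroup V] [Module ℝ V] [FiniteDimensional ℝ V]
    [TopologicalSpace V] [IsTopologicalAddGroup V] [ContinuousSMul ℝ V] [T2Space V]
    [MulAction G V] [ContinuousSMul G V]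
    (hlin : ∀ g : G, IsLinearMap ℝ (fun v : V => g • v))
    (u v : V) (h : u ∉ MulAction.orbit G v) :
    ∃ p : V → ℝ, p ∈ polyFuns V ∧ (∀ (g : G) (w : V), p (g • w) = p w) ∧ p u ≠ p v := by
  classical
  have hsmul_cont : ∀ x : V, Continuous fun g : G => g⁻¹ • x := fun x =>
    continuous_inv.smul continuous_const
  have horbit_compact : ∀ x : V, IsCompact (MulAction.orbit G x) := fun x =>
    isCompact_range (continuous_id.smul continuous_const)
  have hdisj : Disjoint (MulAction.orbit G u) (MulAction.orbit G v) := by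
    rw [Set.disjoint_left]
    rintro x ⟨g, rfl⟩ ⟨g', hg'⟩
    exact h ⟨g⁻¹ * g', by
      show (g⁻¹ * g') • v = u
      rw [mul_smul, show g' • v = g • u from hg', inv_smul_smul]⟩
  -- Stone-Weierstrass on the union of the two orbits
  set K : Set V := MulAction.orbit G u ∪ MulAction.orbit G v with hK
  have hKcomp : IsCompact K := (horbit_compact u).union (horbit_compact v)
  haveI : CompactSpace K := isCompact_iff_compactSpace.mp hKcomp
  let R : polyFuns V →ₐ[ℝ] C(K, ℝ) :=
  { toFun := fun p => ⟨fun x => (p : V → ℝ) x,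
      (polyFuns_continuous p.2).comp continuous_subtype_val⟩
    map_one' := by ext x; rfl
    map_mul' := fun a b => by ext x; rfl
    map_zero' := by ext x; rfl
    map_add' := fun a b => by ext x; rfl
    commutes' := fun r => by ext x; rfl }
  have hsep : (R.range).SeparatesPoints := by
    rintro x y hxy
    have hvne : (x : V) ≠ (y : V) := fun hh => hxy (Subtype.ext hh)
    obtain ⟨l, hl⟩ : ∃ l : Module.Dual ℝ V, l x ≠ l y := by
      by_contra hc
      push_neg at hc
      apply hvne
      apply (Module.finBasis ℝ V).repr.injective
      ext i
      exact hc ((Module.finBasis ℝ V).coord i)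
    exact ⟨_, ⟨R ⟨(l : V → ℝ), Algebra.subset_adjoin ⟨l, rfl⟩⟩, ⟨_, rfl⟩, rfl⟩, hl⟩
  obtain ⟨F, hF0, hF1, hF01⟩ := exists_continuous_zero_one_of_isClosed
    (X := K) (s := Subtype.val ⁻¹' (MulAction.orbit G v))
    (t := Subtype.val ⁻¹' (MulAction.orbit G u))
    (((horbit_compact v).isClosed).preimage continuous_subtype_val)
    (((horbit_compact u).isClosed).preimage continuous_subtype_val)
    ((hdisj.preimage Subtype.val).symm)
  obtain ⟨g0, hg0⟩ := ContinuousMap.exists_mem_subalgebra_near_continuousMap_of_separatesPoints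
    R.range hsep F (1/4) (by norm_num)
  obtain ⟨q₀, hq₀⟩ := g0.2
  set q : V → ℝ := (q₀ : V → ℝ) with hqdef
  have hq : q ∈ polyFuns V := q₀.2
  have hbound : ∀ x : K, |q x - F x| < 1/4 := by
    intro x
    have h1 := ContinuousMap.norm_coe_le_norm ((g0 : C(K, ℝ)) - F) x
    have h2 : ((g0 : C(K, ℝ)) - F) x = q x - F x := by
      rw [ContinuousMap.sub_apply]
      congr 1
      rw [← hq₀]
      rfl
    rw [h2, Real.norm_eq_abs] at h1
    exact lt_of_le_of_lt h1 hg0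
  have hqu : ∀ x ∈ MulAction.orbit G u, (3 : ℝ)/4 ≤ q x := by
    intro x hx
    have hb := hbound ⟨x, Or.inl hx⟩
    have hF := hF1 (show (⟨x, Or.inl hx⟩ : K) ∈ _ from hx)
    rw [show F ⟨x, Or.inl hx⟩ = 1 from hF] at hb
    have := abs_lt.mp hb
    linarith [this.1]
  have hqv : ∀ x ∈ MulAction.orbit G v, q x ≤ (1 : ℝ)/4 := by
    intro x hx
    have hb := hbound ⟨x, Or.inr hx⟩
    have hF := hF0 (show (⟨x, Or.inr hx⟩ : K) ∈ _ from hx)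
    rw [show F ⟨x, Or.inr hx⟩ = 0 from hF] at hb
    have := abs_lt.mp hb
    linarith [this.2]
  -- Haar measure
  letI : MeasurableSpace G := borel G
  haveI : BorelSpace G := ⟨rfl⟩
  set μ : MeasureTheory.Measure G := MeasureTheory.Measure.haarMeasure (⊤ : PositiveCompacts G)
    with hμ
  haveI : IsProbabilityMeasure μ := by
    constructor
    have h1 := MeasureTheory.Measure.haarMeasure_self (K₀ := (⊤ : PositiveCompacts G))
    rwa [PositiveCompacts.coe_top] at h1
  have hint : ∀ x : V, Integrable (fun g : G => q (g⁻¹ • x)) μ := fun x =>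
    ((polyFuns_continuous hq).comp (hsmul_cont x)).integrable_of_hasCompactSupport
      (HasCompactSupport.of_compactSpace _)
  -- the finite-dimensional space of polynomial functions containing all translates of `q`
  set b : Module.Basis (Fin (Module.finrank ℝ V)) ℝ V := Module.finBasis ℝ V with hb
  obtain ⟨P, hP⟩ := polyFuns_le_range b hq
  set d := P.totalDegree with hd
  set W : Submodule ℝ (V → ℝ) :=
    Submodule.map (polyRep b).toLinearMap
      (MvPolynomial.restrictTotalDegree (Fin (Module.finrank ℝ V)) ℝ d) with hW
  haveI : FiniteDimensional ℝ W := inferInstance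
  have hcw : ∀ g : G, (fun w => q (g⁻¹ • w)) ∈ W := by
    intro g
    set T : V →ₗ[ℝ] V := IsLinearMap.mk' _ (hlin g⁻¹) with hT
    refine ⟨MvPolynomial.aeval
      (fun i => ∑ j, MvPolynomial.C (b.coord i (T (b j))) * MvPolynomial.X j) P, ?_, ?_⟩
    · rw [SetLike.mem_coe, MvPolynomial.mem_restrictTotalDegree]
      refine totalDegree_aeval_le _ (fun i => ?_) P
      refine (MvPolynomial.totalDegree_finset_sum _ _).trans (Finset.sup_le fun j _ => ?_)
      refine (MvPolynomial.totalDegree_mul _ _).trans ?_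
      rw [MvPolynomial.totalDegree_C, MvPolynomial.totalDegree_X, zero_add]
    · show polyRep b _ = _
      rw [polyRep_comp_linear b T P, hP]
      funext w
      rfl
  obtain ⟨m, pts, f, hexp⟩ := exists_eval_expansion W
  let c : G → W := fun g => ⟨fun w => q (g⁻¹ • w), hcw g⟩
  set p : V → ℝ := fun w => ∫ g, q (g⁻¹ • w) ∂μ with hp
  let phat : W := ∑ j, (∫ g, q (g⁻¹ • pts j) ∂μ) • f j
  have hpeq : p = (phat : V → ℝ) := by
    funext w
    calc (∫ g, q (g⁻¹ • w) ∂μ)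
        = ∫ g, ∑ j, q (g⁻¹ • pts j) * (f j : V → ℝ) w ∂μ := by
          congr 1
          funext g
          exact hexp (c g) w
      _ = ∑ j, ∫ g, q (g⁻¹ • pts j) * (f j : V → ℝ) w ∂μ :=
          integral_finset_sum _ fun j _ => (hint (pts j)).mul_const _
      _ = ∑ j, (∫ g, q (g⁻¹ • pts j) ∂μ) * (f j : V → ℝ) w :=
          Finset.sum_congr rfl fun j _ => integral_mul_const _ _
      _ = (phat : V → ℝ) w := by
          simp only [phat, Submodule.coe_sum, Finset.sum_apply, Submodule.coe_smul,
            Pi.smul_apply, smul_eq_mul]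
  refine ⟨p, ?_, ?_, ?_⟩
  · rw [hpeq]
    obtain ⟨Q, hQ1, hQ2⟩ := phat.2
    exact hQ2 ▸ polyRep_mem b Q
  · intro g₀ w
    rw [hp]
    simp only
    calc ∫ g, q (g⁻¹ • (g₀ • w)) ∂μ
        = ∫ g, q ((g₀⁻¹ * g)⁻¹ • w) ∂μ := by
          congr 1
          funext g
          rw [mul_inv_rev, inv_inv, mul_smul]
      _ = ∫ g, q (g⁻¹ • w) ∂μ := integral_mul_left_eq_self (fun g => q (g⁻¹ • w)) g₀⁻¹
  · have hconst : ∀ r : ℝ, ∫ _ : G, r ∂μ = r := by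
      intro r
      simp [measure_univ]
    have hu : (3 : ℝ)/4 ≤ p u := by
      rw [hp]
      simp only
      rw [← hconst ((3 : ℝ)/4)]
      exact integral_mono (integrable_const _) (hint u) fun g => hqu _ ⟨g⁻¹, rfl⟩
    have hv : p v ≤ (1 : ℝ)/4 := by
      rw [hp]
      simp only
      rw [← hconst ((1 : ℝ)/4)]
      exact integral_mono (hint v) (integrable_const _) fun g => hqv _ ⟨g⁻¹, rfl⟩
    intro heq
    rw [heq] at hu
    linarith
end

section
/- Let G be a compact group acting linearly on a finite dimensional real vector space V, and let {p_1,...,p_r} be a set of G-invariant polynomials generating the algebra of all G-invariant polynomials on V. Then for u, v ∈ V, p_i(u) = p_i(v) for all i = 1,...,r if and only if u and v lie in the same G-orbit. -/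
open MeasureTheory MvPolynomial in
private lemma eval_aeval_helper {n : ℕ} (q : MvPolynomial (Fin n) ℝ)
    (L : Fin n → MvPolynomial (Fin n) ℝ) (y : Fin n → ℝ) :
    eval y (aeval L q) = eval (fun i => eval y (L i)) q := by
  induction q using MvPolynomial.induction_on with
  | C a => simp only [aeval_C, eval_C, MvPolynomial.algebraMap_eq]
  | add p q hp hq => simp only [map_add, hp, hq]
  | mul_X p i hp => simp only [map_mul, aeval_X, eval_X, hp]

open MvPolynomial in
private lemma mem_polyFuns_eval {V : Type*} [AddCommGroup V] [Module ℝ V] {n : ℕ}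
    (e : V →ₗ[ℝ] (Fin n → ℝ)) (q : MvPolynomial (Fin n) ℝ) :
    (fun w => eval (e w) q) ∈ polyFuns V := by
  induction q using MvPolynomial.induction_on with
  | C a =>
      have h : (fun w : V => eval (e w) (C a)) = algebraMap ℝ (V → ℝ) a := by
        funext w; simp [Pi.algebraMap_apply]
      rw [h]; exact Subalgebra.algebraMap_mem _ a
  | add p q hp hq =>
      have h : (fun w : V => eval (e w) (p + q))
          = (fun w => eval (e w) p) + fun w => eval (e w) q := by
        funext w; simp
      rw [h]; exact add_mem hp hq
  | mul_X p i hp =>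
      have h : (fun w : V => eval (e w) (p * X i))
          = (fun w => eval (e w) p) * fun w => e w i := by
        funext w; simp
      rw [h]
      exact mul_mem hp
        (Algebra.subset_adjoin ⟨(LinearMap.proj i).comp e, rfl⟩)

open MeasureTheory MvPolynomial in
/-- If `p_1, …, p_r` is an integrity basis (a generating set of the algebra of all `G`-invariant
polynomial functions on `V`, `G` compact), then `p_i(u) = p_i(v)` for all `i` iff `u` and `v`
lie in the same `G`-orbit. -/
theorem integrity_basis_separates_orbits
    (G : Type*) [Group G] [TopologicalSpace G] [IsTopologicalGroup G] [CompactSpace G]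
    (V : Type*) [AddCommGroup V] [Module ℝ V] [FiniteDimensional ℝ V]
    [TopologicalSpace V] [IsTopologicalAddGroup V] [ContinuousSMul ℝ V] [T2Space V]
    [MulAction G V] [ContinuousSMul G V]
    (hlin : ∀ g : G, IsLinearMap ℝ (fun v : V => g • v))
    (r : ℕ) (p : Fin r → (V → ℝ))
    (hp : ∀ i, p i ∈ polyFuns V ∧ ∀ (g : G) (w : V), (p i) (g • w) = (p i) w)
    (hgen : (Algebra.adjoin ℝ (Set.range p) : Set (V → ℝ)) =
      {f : V → ℝ | f ∈ polyFuns V ∧ ∀ (g : G) (w : V), f (g • w) = f w}) :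
    ∀ u v : V, (∀ i, p i u = p i v) ↔ u ∈ MulAction.orbit G v := by
  intro u v
  constructor
  · intro hpuv
    by_contra hu
    classical
    borelize G
    -- coordinates on V
    set n := Module.finrank ℝ V with hn
    let b : Module.Basis (Fin n) ℝ V := Module.finBasis ℝ V
    let e : V ≃ₗ[ℝ] (Fin n → ℝ) := b.equivFun
    have he : Continuous e := LinearMap.continuous_of_finiteDimensional e.toLinearMap
    -- orbits are compact and disjoint
    have horbu : IsCompact (MulAction.orbit G u) :=
      isCompact_range (continuous_id.smul continuous_const)
    have horbv : IsCompact (MulAction.orbit G v) :=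
      isCompact_range (continuous_id.smul continuous_const)
    have hdis : Disjoint (MulAction.orbit G u) (MulAction.orbit G v) := by
      rw [Set.disjoint_left]
      rintro x ⟨g, rfl⟩ ⟨h, hh⟩
      refine hu ⟨g⁻¹ * h, ?_⟩
      have hh' : h • v = g • u := hh
      show (g⁻¹ * h) • v = u
      rw [mul_smul, hh', inv_smul_smul]
    set A : Set (Fin n → ℝ) := e '' MulAction.orbit G u with hA_def
    set B : Set (Fin n → ℝ) := e '' MulAction.orbit G v with hB_def
    have hA : IsCompact A := horbu.image he
    have hB : IsCompact B := horbv.image he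
    have hABdis : Disjoint A B := Set.disjoint_image_of_injective e.injective hdis
    -- Urysohn: a continuous function 0 on B, 1 on A
    obtain ⟨F₀, hF₀B, hF₀A, hF₀01⟩ :=
      exists_continuous_zero_one_of_isCompact hB hA.isClosed hABdis.symm
    -- Stone–Weierstrass on K = A ∪ B
    set K : Set (Fin n → ℝ) := A ∪ B with hK_def
    have hKcomp : IsCompact K := hA.union hB
    haveI : CompactSpace K := isCompact_iff_compactSpace.mp hKcomp
    let c : Fin n → C(K, ℝ) := fun i =>
      ⟨fun x => (x : Fin n → ℝ) i, (continuous_apply i).comp continuous_subtype_val⟩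
    let Ψ : MvPolynomial (Fin n) ℝ →ₐ[ℝ] C(K, ℝ) := aeval c
    have hΨeval : ∀ (q : MvPolynomial (Fin n) ℝ) (x : K),
        (Ψ q) x = eval (x : Fin n → ℝ) q := by
      intro q x
      induction q using MvPolynomial.induction_on with
      | C a => simp [Ψ]
      | add p q hp hq => simp [map_add, hp, hq]
      | mul_X p i hp => simp [map_mul, hp, Ψ, c]
    have hsep : (Ψ.range).SeparatesPoints := by
      rintro x y hxy
      obtain ⟨i, hi⟩ : ∃ i, (x : Fin n → ℝ) i ≠ (y : Fin n → ℝ) i := by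
        by_contra hcon
        push_neg at hcon
        exact hxy (Subtype.ext (funext hcon))
      exact ⟨⇑(c i), ⟨c i, show c i ∈ Ψ.range from ⟨X i, aeval_X c i⟩, rfl⟩, hi⟩
    obtain ⟨g₀, hg₀⟩ := ContinuousMap.exists_mem_subalgebra_near_continuous_of_separatesPoints
      Ψ.range hsep (fun x : K => F₀ x) (F₀.continuous.comp continuous_subtype_val)
      (1/3) (by norm_num)
    obtain ⟨q, hq⟩ := g₀.2
    have hq' : Ψ q = (g₀ : C(K, ℝ)) := hq
    -- the polynomial q is > 2/3 on A and < 1/3 on B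
    have hqA : ∀ x ∈ A, (2 : ℝ)/3 ≤ eval x q := by
      intro x hx
      have hxK : x ∈ K := Or.inl hx
      have := hg₀ ⟨x, hxK⟩
      rw [← hq', hΨeval q ⟨x, hxK⟩] at this
      have h1 : F₀ x = 1 := hF₀A hx
      simp only [h1, Real.norm_eq_abs] at this
      have := abs_lt.mp this
      linarith [this.1]
    have hqB : ∀ x ∈ B, eval x q ≤ (1 : ℝ)/3 := by
      intro x hx
      have hxK : x ∈ K := Or.inr hx
      have := hg₀ ⟨x, hxK⟩
      rw [← hq', hΨeval q ⟨x, hxK⟩] at this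
      have h0 : F₀ x = 0 := hF₀B hx
      simp only [h0, Real.norm_eq_abs, sub_zero] at this
      have := abs_lt.mp this
      linarith [this.2]
    -- Haar probability measure on G
    let K₀ : TopologicalSpace.PositiveCompacts G :=
      ⟨⟨Set.univ, isCompact_univ⟩, by simp⟩
    let μ : Measure G := Measure.haarMeasure K₀
    haveI : IsProbabilityMeasure μ := by
      constructor
      have : μ (K₀ : Set G) = 1 := Measure.haarMeasure_self
      exact this
    have hint : ∀ {f : G → ℝ}, Continuous f → Integrable f μ := by
      intro f hf
      exact integrableOn_univ.mp
        (hf.continuousOn.integrableOn_compact' isCompact_univ MeasurableSet.univ)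
    -- the matrix of the action of g⁻¹
    let M : G → Fin n → Fin n → ℝ := fun g i j => e (g⁻¹ • b j) i
    have hMcont : ∀ i j, Continuous fun g : G => M g i j := by
      intro i j
      exact (continuous_apply i).comp (he.comp (continuous_inv.smul continuous_const))
    have hM : ∀ (g : G) (w : V), e (g⁻¹ • w) = fun i => ∑ j, M g i j * e w j := by
      intro g w
      let T : V →ₗ[ℝ] V := IsLinearMap.mk' _ (hlin g⁻¹)
      have h1 : g⁻¹ • w = ∑ j, b.equivFun w j • (g⁻¹ • b j) := by
        conv_lhs => rw [← b.sum_equivFun w]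
        show T (∑ j, b.equivFun w j • b j) = _
        rw [map_sum]
        exact Finset.sum_congr rfl fun j _ => T.map_smul _ _
      funext i
      rw [h1, map_sum]
      simp only [_root_.map_smul, Finset.sum_apply, Pi.smul_apply, smul_eq_mul]
      exact Finset.sum_congr rfl fun j _ => mul_comm _ _
    -- polynomial substitution induced by g
    let L : G → Fin n → MvPolynomial (Fin n) ℝ := fun g i => ∑ j, C (M g i j) * X j
    let σ : G → MvPolynomial (Fin n) ℝ → MvPolynomial (Fin n) ℝ := fun g => aeval (L g)
    have hσeval : ∀ (g : G) (w : V), eval (e w) (σ g q) = eval (e (g⁻¹ • w)) q := by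
      intro g w
      rw [eval_aeval_helper]
      have harg : (fun i => eval (e w) (L g i)) = e (g⁻¹ • w) := by
        funext i
        rw [hM g w]
        simp [L, map_sum]
      rw [harg]
    -- degree bounds
    set d : ℕ := q.totalDegree with hd
    set D : Fin n →₀ ℕ := Finsupp.equivFunOnFinite.symm (fun _ => d) with hD
    have hLdeg : ∀ (g : G) (i : Fin n), (L g i).totalDegree ≤ 1 := by
      intro g i
      refine (totalDegree_finset_sum _ _).trans ?_
      refine Finset.sup_le fun j _ => ?_
      refine (totalDegree_mul _ _).trans ?_
      simp [totalDegree_C, totalDegree_X]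
    have hdeg : ∀ g : G, (σ g q).totalDegree ≤ d := by
      intro g
      show (aeval (L g) q).totalDegree ≤ d
      rw [aeval_def, eval₂_eq]
      refine (totalDegree_finset_sum _ _).trans (Finset.sup_le fun m hm => ?_)
      refine (totalDegree_mul _ _).trans ?_
      have hcm : ((algebraMap ℝ (MvPolynomial (Fin n) ℝ)) (coeff m q)).totalDegree = 0 := by
        simp [algebraMap_eq, totalDegree_C]
      rw [hcm, zero_add]
      refine (totalDegree_finset_prod _ _).trans ?_
      calc ∑ i ∈ m.support, ((L g i) ^ (m i)).totalDegree
          ≤ ∑ i ∈ m.support, m i * 1 := by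
            refine Finset.sum_le_sum fun i _ => ?_
            exact (totalDegree_pow _ _).trans (Nat.mul_le_mul_left _ (hLdeg g i))
        _ = ∑ i ∈ m.support, m i := by simp
        _ ≤ d := le_totalDegree hm
    have hsupp : ∀ g : G, (σ g q).support ⊆ Finset.Iic D := by
      intro g m hm
      rw [Finset.mem_Iic]
      intro i
      have h1 : m i ≤ (m.sum fun _ k => k) := by
        by_cases h : m i = 0
        · simp [h]
        · exact Finset.single_le_sum (f := fun i => m i) (fun _ _ => Nat.zero_le _)
            (Finsupp.mem_support_iff.mpr h)
      have h2 : (m.sum fun _ k => k) ≤ d := (le_totalDegree hm).trans (hdeg g)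
      simpa [hD] using h1.trans h2
    -- continuity of the coefficients of σ g q' in g
    have hcoeff : ∀ (q' : MvPolynomial (Fin n) ℝ) (m : Fin n →₀ ℕ),
        Continuous fun g : G => coeff m (σ g q') := by
      intro q'
      induction q' using MvPolynomial.induction_on with
      | C a =>
          intro m
          have : ∀ g : G, coeff m (σ g (C a)) = coeff m (C a) := by
            intro g; simp [σ, aeval_C, algebraMap_eq]
          simp only [this]
          exact continuous_const
      | add p₁ p₂ hp₁ hp₂ =>
          intro m
          have : ∀ g : G, coeff m (σ g (p₁ + p₂)) = coeff m (σ g p₁) + coeff m (σ g p₂) := by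
            intro g; simp [σ, map_add, coeff_add]
          simp only [this]
          exact (hp₁ m).add (hp₂ m)
      | mul_X p₁ i hp₁ =>
          intro m
          have key : ∀ g : G, coeff m (σ g (p₁ * X i)) =
              ∑ x ∈ Finset.HasAntidiagonal.antidiagonal m,
                coeff x.1 (σ g p₁) * ∑ j, M g i j * coeff x.2 (X j) := by
            intro g
            have h1 : σ g (p₁ * X i) = σ g p₁ * L g i := by
              simp [σ, map_mul, aeval_X]
            rw [h1, coeff_mul]
            refine Finset.sum_congr rfl fun x _ => ?_
            congr 1
            show coeff x.2 (∑ j, C (M g i j) * X j) = _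
            rw [coeff_sum]
            refine Finset.sum_congr rfl fun j _ => ?_
            rw [coeff_C_mul]
          simp only [key]
          refine continuous_finset_sum _ fun x _ => ?_
          exact (hp₁ x.1).mul (continuous_finset_sum _ fun j _ =>
            (hMcont i j).mul continuous_const)
    -- the averaged polynomial
    let cbar : (Fin n →₀ ℕ) → ℝ := fun m => ∫ g, coeff m (σ g q) ∂μ
    let P' : MvPolynomial (Fin n) ℝ := ∑ m ∈ Finset.Iic D, monomial m (cbar m)
    let P : V → ℝ := fun w => eval (e w) P'
    -- P w as an integral
    have hPeval : ∀ w : V, P w = ∫ g, eval (e (g⁻¹ • w)) q ∂μ := by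
      intro w
      have h1 : P w = ∑ m ∈ Finset.Iic D, cbar m * (m.prod fun i k => (e w i) ^ k) := by
        show eval (e w) P' = _
        rw [map_sum]
        refine Finset.sum_congr rfl fun m _ => ?_
        rw [eval_monomial]
      have h2 : ∀ g : G, eval (e (g⁻¹ • w)) q
          = ∑ m ∈ Finset.Iic D, coeff m (σ g q) * (m.prod fun i k => (e w i) ^ k) := by
        intro g
        rw [← hσeval g w, eval_eq]
        rw [Finset.sum_subset (hsupp g)
          (fun m _ hm => by rw [notMem_support_iff.mp hm, zero_mul])]
        refine Finset.sum_congr rfl fun m _ => ?_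
        rw [Finsupp.prod]
      rw [h1]
      rw [MeasureTheory.integral_congr_ae (Filter.EventuallyEq.of_eq (funext h2))]
      rw [MeasureTheory.integral_finset_sum]
      · refine Finset.sum_congr rfl fun m _ => ?_
        rw [MeasureTheory.integral_mul_const]
      · intro m _
        exact (hint ((hcoeff q m))).mul_const _
    -- P is G-invariant
    have hPinv : ∀ (g : G) (w : V), P (g • w) = P w := by
      intro h w
      rw [hPeval (h • w), hPeval w]
      have h2 : ∀ g : G, eval (e (g⁻¹ • (h • w))) q
          = (fun g' : G => eval (e (g'⁻¹ • w)) q) (h⁻¹ * g) := by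
        intro g
        simp only []
        congr 2
        rw [mul_inv_rev, inv_inv, mul_smul]
      rw [MeasureTheory.integral_congr_ae (Filter.EventuallyEq.of_eq (funext h2))]
      exact MeasureTheory.integral_mul_left_eq_self (μ := μ)
        (fun g' : G => eval (e (g'⁻¹ • w)) q) h⁻¹
    -- bounds on P u and P v
    have hcont_orbit : ∀ w : V, Continuous fun g : G => eval (e (g⁻¹ • w)) q := by
      intro w
      exact (MvPolynomial.continuous_eval q).comp
        (he.comp (continuous_inv.smul continuous_const))
    have hPu : (2 : ℝ)/3 ≤ P u := by
      rw [hPeval u]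
      have hb : ∀ g : G, (2 : ℝ)/3 ≤ eval (e (g⁻¹ • u)) q := by
        intro g
        exact hqA _ ⟨g⁻¹ • u, ⟨g⁻¹, rfl⟩, rfl⟩
      calc (2 : ℝ)/3 = ∫ _ : G, (2 : ℝ)/3 ∂μ := by simp
        _ ≤ ∫ g, eval (e (g⁻¹ • u)) q ∂μ :=
            integral_mono (integrable_const _) (hint (hcont_orbit u)) hb
    have hPv : P v ≤ (1 : ℝ)/3 := by
      rw [hPeval v]
      have hb : ∀ g : G, eval (e (g⁻¹ • v)) q ≤ (1 : ℝ)/3 := by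
        intro g
        exact hqB _ ⟨g⁻¹ • v, ⟨g⁻¹, rfl⟩, rfl⟩
      calc ∫ g, eval (e (g⁻¹ • v)) q ∂μ ≤ ∫ _ : G, (1 : ℝ)/3 ∂μ :=
            integral_mono (hint (hcont_orbit v)) (integrable_const _) hb
        _ = (1 : ℝ)/3 := by simp
    -- P is an invariant polynomial function, hence lies in the adjoin of the p i
    have hPmem : P ∈ polyFuns V := mem_polyFuns_eval e.toLinearMap P'
    have hPadj : P ∈ Algebra.adjoin ℝ (Set.range p) := by
      have : P ∈ {f : V → ℝ | f ∈ polyFuns V ∧ ∀ (g : G) (w : V), f (g • w) = f w} :=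
        ⟨hPmem, hPinv⟩
      rw [← hgen] at this
      exact this
    -- evaluations at u and v agree on the adjoin
    have hPuv : P u = P v := by
      have hsub : Algebra.adjoin ℝ (Set.range p) ≤
          AlgHom.equalizer (Pi.evalAlgHom ℝ (fun _ : V => ℝ) u)
            (Pi.evalAlgHom ℝ (fun _ : V => ℝ) v) := by
        rw [Algebra.adjoin_le_iff]
        rintro f ⟨i, rfl⟩
        exact hpuv i
      exact hsub hPadj
    linarith
  · rintro ⟨g, rfl⟩
    intro i
    exact (hp i).2 g v
end

section
/- Let G be a compact group acting linearly on a finite dimensional real vector space V, and let {p_1,...,p_r} be an integrity basis of the algebra of G-invariant polynomials. Then {p_1,...,p_r} is a function basis: for every G-invariant function f : V → ℝ there exists a function h : ℝ^r → ℝ such that f(v) = h(p_1(v),...,p_r(v)) for all v ∈ V. -/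
open MvPolynomial MeasureTheory

section Helpers

variable {V : Type*} [AddCommGroup V] [Module ℝ V] [FiniteDimensional ℝ V]
    [TopologicalSpace V] [IsTopologicalAddGroup V] [ContinuousSMul ℝ V] [T2Space V]

theorem continuous_of_mem_polyFuns {f : V → ℝ} (hf : f ∈ polyFuns V) : Continuous f := by
  induction hf using Algebra.adjoin_induction with
  | mem g hg => obtain ⟨l, rfl⟩ := hg; exact l.continuous_of_finiteDimensional
  | algebraMap r => exact continuous_const
  | add _ _ _ _ h1 h2 => exact h1.add h2
  | mul _ _ _ _ h1 h2 => exact h1.mul h2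

/-- evaluation of an `aeval` into a Pi algebra. -/
theorem aeval_pi_apply {ι : Type*} (f : ι → V → ℝ) (Q : MvPolynomial ι ℝ) (v : V) :
    (MvPolynomial.aeval f Q) v = MvPolynomial.eval (fun i => f i v) Q := by
  induction Q using MvPolynomial.induction_on with
  | C a => simp [MvPolynomial.algebraMap_eq]
  | add p q hp hq => simp [hp, hq]
  | mul_X p i hp => simp [hp]

theorem polyFuns_eq_range (b : Module.Basis (Fin (Module.finrank ℝ V)) ℝ V) :
    polyFuns V = (MvPolynomial.aeval (fun i => ((b.coord i : V →ₗ[ℝ] ℝ) : V → ℝ))).range := by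
  rw [← Algebra.adjoin_range_eq_range_aeval]
  apply le_antisymm
  · apply Algebra.adjoin_le
    rintro _ ⟨l, rfl⟩
    have : (l : V → ℝ) = ∑ i, l (b i) • ((b.coord i : V →ₗ[ℝ] ℝ) : V → ℝ) := by
      funext v
      conv_lhs => rw [← b.sum_repr v, map_sum]
      simp [Finset.sum_apply, mul_comm, Module.Basis.coord_apply]
    show (l : V → ℝ) ∈ _
    rw [this]
    refine Subalgebra.sum_mem _ fun i _ => Subalgebra.smul_mem _ ?_ _
    exact Algebra.subset_adjoin (Set.mem_range.mpr ⟨i, rfl⟩)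
  · apply Algebra.adjoin_le
    rintro _ ⟨i, rfl⟩
    exact Algebra.subset_adjoin ⟨b.coord i, rfl⟩

end Helpers


theorem totalDegree_aeval_le_s11 {n : ℕ} (L : Fin n → MvPolynomial (Fin n) ℝ)
    (hL : ∀ i, (L i).totalDegree ≤ 1) (Q : MvPolynomial (Fin n) ℝ) :
    (aeval L Q).totalDegree ≤ Q.totalDegree := by
  conv_lhs => rw [Q.as_sum]
  rw [map_sum]
  apply (totalDegree_finset_sum _ _).trans
  apply Finset.sup_le
  intro μ hμ
  rw [aeval_monomial]
  apply (totalDegree_mul _ _).trans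
  have h1 : (algebraMap ℝ (MvPolynomial (Fin n) ℝ) (coeff μ Q)).totalDegree = 0 := by
    rw [algebraMap_eq]; exact totalDegree_C _
  rw [h1, zero_add]
  refine le_trans (le_trans (totalDegree_finset_prod _ _) ?_) (le_totalDegree hμ)
  calc ∑ i ∈ μ.support, (L i ^ μ i).totalDegree
      ≤ ∑ i ∈ μ.support, μ i * (L i).totalDegree := by
        exact Finset.sum_le_sum fun i _ => totalDegree_pow _ _
    _ ≤ ∑ i ∈ μ.support, μ i * 1 := by
        exact Finset.sum_le_sum fun i _ => Nat.mul_le_mul_left _ (hL i)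
    _ = μ.sum fun _ e => e := by simp [Finsupp.sum]

theorem continuous_coeff_aeval {n : ℕ} {G : Type*} [TopologicalSpace G]
    (a : G → Fin n → Fin n → ℝ) (ha : ∀ i j, Continuous fun g => a g i j)
    (Q : MvPolynomial (Fin n) ℝ) (μ : Fin n →₀ ℕ) :
    Continuous fun g => coeff μ (aeval (fun i => ∑ j, C (a g i j) * X j) Q) := by
  induction Q using MvPolynomial.induction_on generalizing μ with
  | C r =>
    simp only [aeval_C]
    exact continuous_const
  | add p q hp hq =>
    simp only [map_add, coeff_add]
    exact (hp μ).add (hq μ)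
  | mul_X p i hp =>
    simp only [map_mul, aeval_X, coeff_mul]
    refine continuous_finset_sum _ fun x _ => (hp x.1).mul ?_
    simp only [coeff_sum, coeff_C_mul]
    exact continuous_finset_sum _ fun j _ => (ha i j).mul continuous_const


theorem eval_aeval' {n : ℕ} (x : Fin n → ℝ) (L : Fin n → MvPolynomial (Fin n) ℝ)
    (Q : MvPolynomial (Fin n) ℝ) :
    eval x (aeval L Q) = eval (fun i => eval x (L i)) Q := by
  induction Q using MvPolynomial.induction_on with
  | C a => simp [algebraMap_eq]
  | add p q hp hq => simp only [map_add, hp, hq]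
  | mul_X p i hp => simp only [map_mul, aeval_X, eval_X, hp]

theorem orbit_separation
    (G : Type*) [Group G] [TopologicalSpace G] [IsTopologicalGroup G] [CompactSpace G]
    (V : Type*) [AddCommGroup V] [Module ℝ V] [FiniteDimensional ℝ V]
    [TopologicalSpace V] [IsTopologicalAddGroup V] [ContinuousSMul ℝ V] [T2Space V]
    [MulAction G V] [ContinuousSMul G V]
    (hlin : ∀ g : G, IsLinearMap ℝ (fun v : V => g • v))
    (r : ℕ) (p : Fin r → (V → ℝ))
    (hgen : (Algebra.adjoin ℝ (Set.range p) : Set (V → ℝ)) =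
      {f : V → ℝ | f ∈ polyFuns V ∧ ∀ (g : G) (w : V), f (g • w) = f w})
    (u v : V) (huv : ∀ i, p i u = p i v) : v ∈ MulAction.orbit G u := by
  by_contra hv
  -- every element of the adjoin agrees at u, v
  have hagree : ∀ F ∈ Algebra.adjoin ℝ (Set.range p), F u = F v := by
    intro F hF
    induction hF using Algebra.adjoin_induction with
    | mem f hf => obtain ⟨i, rfl⟩ := hf; exact huv i
    | algebraMap r => rfl
    | add f g _ _ h1 h2 => show f u + g u = f v + g v; rw [h1, h2]
    | mul f g _ _ h1 h2 => show f u * g u = f v * g v; rw [h1, h2]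
  haveI : LocallyCompactSpace V := by
    have e := (Module.finBasis ℝ V).equivFun.toContinuousLinearEquiv.toHomeomorph
    exact e.locallyCompactSpace_iff.mpr inferInstance
  have hA : IsCompact (MulAction.orbit G u) :=
    isCompact_range (continuous_id.smul continuous_const)
  have hB : IsCompact (MulAction.orbit G v) :=
    isCompact_range (continuous_id.smul continuous_const)
  have hdisj : Disjoint (MulAction.orbit G u) (MulAction.orbit G v) := by
    rw [Set.disjoint_left]
    rintro x ⟨g, rfl⟩ ⟨g', hg'⟩
    refine hv ⟨g'⁻¹ * g, ?_⟩
    show (g'⁻¹ * g) • u = v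
    have hg'' : g' • v = g • u := hg'
    rw [mul_smul, ← hg'', inv_smul_smul]
  obtain ⟨φ, hφ0, hφ1, hφ01⟩ :=
    exists_continuous_zero_one_of_isCompact hA hB.isClosed hdisj
  set K : Set V := MulAction.orbit G u ∪ MulAction.orbit G v with hK_def
  have hK : IsCompact K := hA.union hB
  haveI : CompactSpace K := isCompact_iff_compactSpace.mp hK
  -- the subalgebra of restrictions of polynomial functions
  let A' : Subalgebra ℝ C(K, ℝ) :=
    { carrier := {f | ∃ q ∈ polyFuns V, ∀ x : K, f x = q x}
      mul_mem' := by
        rintro f g ⟨qf, hqf, hf⟩ ⟨qg, hqg, hg⟩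
        exact ⟨qf * qg, mul_mem hqf hqg, fun x => by
          simp [ContinuousMap.mul_apply, hf x, hg x]⟩
      add_mem' := by
        rintro f g ⟨qf, hqf, hf⟩ ⟨qg, hqg, hg⟩
        exact ⟨qf + qg, add_mem hqf hqg, fun x => by
          simp [ContinuousMap.add_apply, hf x, hg x]⟩
      algebraMap_mem' := fun c =>
        ⟨algebraMap ℝ (V → ℝ) c, Subalgebra.algebraMap_mem _ c, fun x => rfl⟩ }
  have hsep : A'.SeparatesPoints := by
    rintro x y hxy
    have hne : (x : V) ≠ y := fun h => hxy (Subtype.ext h)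
    have : ∃ l : Module.Dual ℝ V, l x ≠ l y := by
      by_contra h
      push_neg at h
      exact hne ((Module.finBasis ℝ V).equivFun.injective
        (funext fun i => h ((Module.finBasis ℝ V).coord i)))
    obtain ⟨l, hl⟩ := this
    refine ⟨_, ⟨ContinuousMap.mk (fun k : K => l k.val)
      (l.continuous_of_finiteDimensional.comp continuous_subtype_val), ?_, rfl⟩, hl⟩
    show ∃ q ∈ polyFuns V, ∀ x : K, l x.val = q x
    exact ⟨(l : V → ℝ), Algebra.subset_adjoin (Set.mem_range.mpr ⟨l, rfl⟩), fun _ => rfl⟩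
  obtain ⟨q', hq'⟩ := ContinuousMap.exists_mem_subalgebra_near_continuous_of_separatesPoints
    A' hsep (fun k : K => φ k) (φ.continuous.comp continuous_subtype_val) (1/3) (by norm_num)
  obtain ⟨q, hq_mem, hq_eq⟩ := q'.2
  have hq : ∀ x ∈ K, |q x - φ x| < 1/3 := by
    intro x hx
    have := hq' ⟨x, hx⟩
    rw [hq_eq ⟨x, hx⟩, Real.norm_eq_abs] at this
    exact this
  -- polynomial representation of q
  set n := Module.finrank ℝ V with hn
  set b : Module.Basis (Fin n) ℝ V := Module.finBasis ℝ V with hb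
  have hq_rng : q ∈ (MvPolynomial.aeval (R := ℝ)
      (fun i => ((b.coord i : V →ₗ[ℝ] ℝ) : V → ℝ))).range := by
    rw [← polyFuns_eq_range b]; exact hq_mem
  obtain ⟨Q₀, hQ₀''⟩ := hq_rng
  have hQ₀ : (MvPolynomial.aeval (R := ℝ)
      (fun i => ((b.coord i : V →ₗ[ℝ] ℝ) : V → ℝ))) Q₀ = q := hQ₀''
  -- Haar measure on G
  letI : MeasurableSpace G := borel G
  haveI : BorelSpace G := ⟨rfl⟩
  set μ : Measure G := Measure.haar with hμ
  -- matrix coefficients of the (inverse) action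
  set a : G → Fin n → Fin n → ℝ := fun g i j => b.coord i (g⁻¹ • b j) with ha_def
  have ha : ∀ i j, Continuous fun g => a g i j := fun i j =>
    (b.coord i).continuous_of_finiteDimensional.comp
      (continuous_inv.smul continuous_const)
  have hcoord : ∀ (g : G) (w : V) (i : Fin n),
      b.coord i (g⁻¹ • w) = ∑ j, a g i j * b.coord j w := by
    intro g w i
    set T : V →ₗ[ℝ] V := IsLinearMap.mk' _ (hlin g⁻¹) with hT
    calc b.coord i (g⁻¹ • w) = b.coord i (T (∑ j, b.repr w j • b j)) := by
          show b.coord i (g⁻¹ • w) = b.coord i (g⁻¹ • (∑ j, b.repr w j • b j))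
          rw [b.sum_repr]
      _ = ∑ j, b.repr w j * b.coord i (T (b j)) := by
          rw [map_sum, map_sum]
          exact Finset.sum_congr rfl fun j _ => by rw [_root_.map_smul, _root_.map_smul, smul_eq_mul]
      _ = ∑ j, a g i j * b.coord j w := by
          refine Finset.sum_congr rfl fun j _ => ?_
          rw [Module.Basis.coord_apply, mul_comm]
          rfl
  -- substituted polynomials
  set L : G → Fin n → MvPolynomial (Fin n) ℝ :=
    fun g i => ∑ j, C (a g i j) * X j with hL
  set P : G → MvPolynomial (Fin n) ℝ := fun g => aeval (L g) Q₀ with hP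
  have hLdeg : ∀ g i, (L g i).totalDegree ≤ 1 := by
    intro g i
    refine (totalDegree_finset_sum _ _).trans (Finset.sup_le fun j _ => ?_)
    refine (totalDegree_mul _ _).trans ?_
    rw [totalDegree_C, totalDegree_X]
  have hPdeg : ∀ g, (P g).totalDegree ≤ Q₀.totalDegree :=
    fun g => totalDegree_aeval_le_s11 (L g) (hLdeg g) Q₀
  set T : Finset (Fin n →₀ ℕ) :=
    Finset.Iic (Finsupp.equivFunOnFinite.symm fun _ : Fin n => Q₀.totalDegree) with hT
  have hsupp : ∀ g, (P g).support ⊆ T := by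
    intro g μ' hμ'
    rw [hT, Finset.mem_Iic]
    rw [Finsupp.le_def]
    intro i
    have h1 : μ' i ≤ μ'.sum fun _ e => e := by
      by_cases hi : i ∈ μ'.support
      · exact Finset.single_le_sum (fun _ _ => Nat.zero_le _) hi
      · simp [Finsupp.notMem_support_iff.mp hi]
    have h2 := (le_totalDegree hμ').trans (hPdeg g)
    simpa using h1.trans h2
  -- the averaged polynomial
  set Pbar : MvPolynomial (Fin n) ℝ :=
    ∑ μ' ∈ T, monomial μ' (∫ g, coeff μ' (P g) ∂μ) with hPbar
  set Qf : V → ℝ := fun w => eval (fun j => b.coord j w) Pbar with hQf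
  have hcont : ∀ μ', Continuous fun g => coeff μ' (P g) :=
    fun μ' => continuous_coeff_aeval a ha Q₀ μ'
  have hcompsupp : ∀ f : G → ℝ, HasCompactSupport f := fun f =>
    IsCompact.of_isClosed_subset isCompact_univ (isClosed_tsupport _) (Set.subset_univ _)
  have hint : ∀ μ', Integrable (fun g => coeff μ' (P g)) μ :=
    fun μ' => (hcont μ').integrable_of_hasCompactSupport (hcompsupp _)
  -- q (g⁻¹ • w) as evaluation of P g
  have hq_eval : ∀ (g : G) (w : V),
      q (g⁻¹ • w) = eval (fun j => b.coord j w) (P g) := by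
    intro g w
    have h0 := aeval_pi_apply (fun i => ((b.coord i : V →ₗ[ℝ] ℝ) : V → ℝ)) Q₀ (g⁻¹ • w)
    rw [hQ₀] at h0
    rw [h0, hP, eval_aeval']
    refine congrArg (fun x => eval x Q₀) (funext fun i => ?_)
    rw [hcoord g w i, hL]
    simp
  -- the pointwise expansion and integral computation
  have hQf_int : ∀ w : V, ∫ g, q (g⁻¹ • w) ∂μ = Qf w := by
    intro w
    have h1 : ∀ g : G, q (g⁻¹ • w) =
        ∑ μ' ∈ T, coeff μ' (P g) * ∏ j, b.coord j w ^ μ' j := by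
      intro g
      rw [hq_eval g w, eval_eq']
      refine Finset.sum_subset (hsupp g) fun μ' _ hns => ?_
      rw [notMem_support_iff.mp hns, zero_mul]
    calc ∫ g, q (g⁻¹ • w) ∂μ
        = ∫ g, ∑ μ' ∈ T, coeff μ' (P g) * ∏ j, b.coord j w ^ μ' j ∂μ := by
          exact integral_congr_ae (Filter.Eventually.of_forall h1)
      _ = ∑ μ' ∈ T, ∫ g, coeff μ' (P g) * ∏ j, b.coord j w ^ μ' j ∂μ := by
          exact integral_finset_sum T fun μ' _ => (hint μ').mul_const _
      _ = ∑ μ' ∈ T, (∫ g, coeff μ' (P g) ∂μ) * ∏ j, b.coord j w ^ μ' j := by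
          exact Finset.sum_congr rfl fun μ' _ => integral_mul_const _ _
      _ = Qf w := by
          simp only [hQf, hPbar, map_sum]
          refine Finset.sum_congr rfl fun μ' _ => ?_
          rw [eval_monomial, Finsupp.prod_pow]
  -- Qf is a polynomial function
  have hQf_poly : Qf ∈ polyFuns V := by
    rw [polyFuns_eq_range b]
    exact ⟨Pbar, funext fun w =>
      aeval_pi_apply (fun i => ((b.coord i : V →ₗ[ℝ] ℝ) : V → ℝ)) Pbar w⟩
  -- Qf is invariant
  have hQf_inv : ∀ (h : G) (w : V), Qf (h • w) = Qf w := by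
    intro h w
    rw [← hQf_int, ← hQf_int]
    calc ∫ g, q (g⁻¹ • h • w) ∂μ
        = ∫ g, q ((h * g)⁻¹ • h • w) ∂μ :=
          (integral_mul_left_eq_self (fun g => q (g⁻¹ • h • w)) h).symm
      _ = ∫ g, q (g⁻¹ • w) ∂μ := by
          refine integral_congr_ae (Filter.Eventually.of_forall fun g => ?_)
          show q ((h * g)⁻¹ • h • w) = q (g⁻¹ • w)
          rw [mul_inv_rev, mul_smul, inv_smul_smul]
  have hQf_adj : Qf ∈ Algebra.adjoin ℝ (Set.range p) := by
    have : Qf ∈ {f : V → ℝ | f ∈ polyFuns V ∧ ∀ (g : G) (w : V), f (g • w) = f w} :=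
      ⟨hQf_poly, fun g w => hQf_inv g w⟩
    rw [← hgen] at this
    exact this
  -- numeric contradiction
  have hqcont : Continuous q := continuous_of_mem_polyFuns hq_mem
  set m : ℝ := (μ Set.univ).toReal with hm_def
  have hm : 0 < m := by
    refine ENNReal.toReal_pos ?_ (measure_ne_top μ _)
    exact (isOpen_univ.measure_pos μ ⟨1, trivial⟩).ne'
  have hQu : ‖Qf u‖ ≤ (1/3) * m := by
    rw [← hQf_int]
    refine norm_integral_le_of_norm_le_const (Filter.Eventually.of_forall fun g => ?_)
    have hmem : g⁻¹ • u ∈ K := Or.inl ⟨g⁻¹, rfl⟩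
    have h0 : φ (g⁻¹ • u) = 0 := hφ0 (Set.mem_range.mpr ⟨g⁻¹, rfl⟩)
    have := (hq _ hmem).le
    rw [h0, sub_zero] at this
    simpa using this
  have hQv : ‖Qf v - m‖ ≤ (1/3) * m := by
    have hint_v : Integrable (fun g => q (g⁻¹ • v)) μ :=
      (hqcont.comp (continuous_inv.smul continuous_const)).integrable_of_hasCompactSupport
        (hcompsupp _)
    have hsub : Qf v - m = ∫ g, (q (g⁻¹ • v) - 1) ∂μ := by
      rw [integral_sub hint_v (integrable_const 1), integral_const, hQf_int]
      simp [hm_def, smul_eq_mul, Measure.real]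
    rw [hsub]
    refine norm_integral_le_of_norm_le_const (Filter.Eventually.of_forall fun g => ?_)
    have hmem : g⁻¹ • v ∈ K := Or.inr ⟨g⁻¹, rfl⟩
    have h1 : φ (g⁻¹ • v) = 1 := hφ1 (Set.mem_range.mpr ⟨g⁻¹, rfl⟩)
    have := (hq _ hmem).le
    rw [h1] at this
    simpa using this
  have heq := hagree Qf hQf_adj
  rw [Real.norm_eq_abs, abs_le] at hQu hQv
  linarith [hQu.1, hQu.2, hQv.1, hQv.2]

/-- If `p_1, …, p_r` is an integrity basis (a generating set of the algebra of all `G`-invariant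
polynomial functions on `V`, `G` compact), then `p_i(u) = p_i(v)` for all `i` iff `u` and `v`
lie in the same `G`-orbit. -/
theorem integrity_basis_is_function_basis
    (G : Type*) [Group G] [TopologicalSpace G] [IsTopologicalGroup G] [CompactSpace G]
    (V : Type*) [AddCommGroup V] [Module ℝ V] [FiniteDimensional ℝ V]
    [TopologicalSpace V] [IsTopologicalAddGroup V] [ContinuousSMul ℝ V] [T2Space V]
    [MulAction G V] [ContinuousSMul G V]
    (hlin : ∀ g : G, IsLinearMap ℝ (fun v : V => g • v))
    (r : ℕ) (p : Fin r → (V → ℝ))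
    (hp : ∀ i, p i ∈ polyFuns V ∧ ∀ (g : G) (w : V), (p i) (g • w) = (p i) w)
    (hgen : (Algebra.adjoin ℝ (Set.range p) : Set (V → ℝ)) =
      {f : V → ℝ | f ∈ polyFuns V ∧ ∀ (g : G) (w : V), f (g • w) = f w}) :
    ∀ f : V → ℝ, (∀ (g : G) (v : V), f (g • v) = f v) →
      ∃ h : (Fin r → ℝ) → ℝ, ∀ v : V, f v = h (fun i => p i v) := by
  intro f hf
  classical
  refine ⟨fun y => if h : ∃ w : V, (fun i => p i w) = y then f h.choose else 0, fun v => ?_⟩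
  have hex : ∃ w : V, (fun i => p i w) = fun i => p i v := ⟨v, rfl⟩
  show f v = if h : ∃ w : V, (fun i => p i w) = fun i => p i v then f h.choose else 0
  rw [dif_pos hex]
  have huv : ∀ i, p i hex.choose = p i v := fun i => congrFun hex.choose_spec i
  obtain ⟨g, hg⟩ := orbit_separation G V hlin r p hgen hex.choose v huv
  have hg' : g • hex.choose = v := hg
  rw [← hf g hex.choose, hg']
end
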